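/- For the group projection problem: minimize ∑ₖ‖η⁽ᵏ⁾ − β⁽ᵏ⁾‖₂² subject to ∑ₖ‖β⁽ᵏ⁾‖₂ ≤ λ, the optimal solution is β⁽ᵏ⁾ = η⁽ᵏ⁾ · (ξ̄ₖ/ξₖ) where ξₖ = ‖η⁽ᵏ⁾‖₂ (with β⁽ᵏ⁾ = 0 if ξₖ = 0) and (ξ̄₁,…,ξ̄_g) is the Euclidean projection of (ξ₁,…,ξ_g) onto the ℓ₁-ball of radius λ in ℝᵍ. -/

import Mathlib

open Finset

lemma sq_key {n : ℕ} (a b : Fin n → ℝ) :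
    (Real.sqrt (∑ j, a j ^ 2) - Real.sqrt (∑ j, b j ^ 2)) ^ 2 ≤ ∑ j, (a j - b j) ^ 2 := by
  set A : EuclideanSpace ℝ (Fin n) := (WithLp.equiv 2 (Fin n → ℝ)).symm a with hAdef
  set B : EuclideanSpace ℝ (Fin n) := (WithLp.equiv 2 (Fin n → ℝ)).symm b with hBdef
  have hA : ‖A‖ = Real.sqrt (∑ j, a j ^ 2) := by
    simp [EuclideanSpace.norm_eq, hAdef, Real.norm_eq_abs, sq_abs]
  have hB : ‖B‖ = Real.sqrt (∑ j, b j ^ 2) := by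
    simp [EuclideanSpace.norm_eq, hBdef, Real.norm_eq_abs, sq_abs]
  have hAB : ‖A - B‖ = Real.sqrt (∑ j, (a j - b j) ^ 2) := by
    simp [EuclideanSpace.norm_eq, hAdef, hBdef, Real.norm_eq_abs, sq_abs, WithLp.equiv_symm_apply]
  have h1 : |‖A‖ - ‖B‖| ≤ ‖A - B‖ := abs_norm_sub_norm_le A B
  have h2 : (‖A‖ - ‖B‖) ^ 2 ≤ ‖A - B‖ ^ 2 := by
    rw [← sq_abs (‖A‖ - ‖B‖)]
    exact pow_le_pow_left₀ (abs_nonneg _) h1 2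
  rw [hA, hB] at h2
  rw [hAB] at h2
  rwa [Real.sq_sqrt (Finset.sum_nonneg fun j _ => sq_nonneg _)] at h2

theorem stmt_12 {g : ℕ} {d : Fin g → ℕ} (η : (k : Fin g) → Fin (d k) → ℝ)
    (lam : ℝ) (hlam : 0 ≤ lam)
    (ξ : Fin g → ℝ) (hξ : ∀ k, ξ k = Real.sqrt (∑ j, (η k j) ^ 2))
    (ξbar : Fin g → ℝ)
    (hξbarfeas : ∑ k, |ξbar k| ≤ lam)
    (hξbaropt : ∀ x : Fin g → ℝ, ∑ k, |x k| ≤ lam →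
      ∑ k, (ξ k - ξbar k) ^ 2 ≤ ∑ k, (ξ k - x k) ^ 2)
    (β : (k : Fin g) → Fin (d k) → ℝ)
    (hβ : ∀ k j, β k j = if ξ k = 0 then 0 else η k j * (ξbar k / ξ k)) :
    (∑ k, Real.sqrt (∑ j, (β k j) ^ 2) ≤ lam) ∧
    ∀ β' : (k : Fin g) → Fin (d k) → ℝ,
      (∑ k, Real.sqrt (∑ j, (β' k j) ^ 2) ≤ lam) →
      ∑ k, ∑ j, (η k j - β k j) ^ 2 ≤ ∑ k, ∑ j, (η k j - β' k j) ^ 2 := by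
  have hξnn : ∀ k, 0 ≤ ξ k := fun k => (hξ k) ▸ Real.sqrt_nonneg _
  have hξsq : ∀ k, ξ k ^ 2 = ∑ j, η k j ^ 2 := fun k => by
    rw [hξ k]; exact Real.sq_sqrt (Finset.sum_nonneg fun j _ => sq_nonneg _)
  have hzero : ∀ k, ξ k = 0 → ∀ j, η k j = 0 := by
    intro k hk j
    have hs : ∑ j, η k j ^ 2 = 0 := by rw [← hξsq k, hk]; ring
    have := (Finset.sum_eq_zero_iff_of_nonneg (fun j _ => sq_nonneg (η k j))).1 hs
      j (Finset.mem_univ j)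
    exact pow_eq_zero_iff (n := 2) (by norm_num) |>.mp this
  -- per-group squared norm of β
  have hβsq : ∀ k, ∑ j, β k j ^ 2 = if ξ k = 0 then 0 else ξbar k ^ 2 := by
    intro k
    by_cases hk : ξ k = 0
    · simp [hβ, hk]
    · simp only [hk, if_false]
      have : ∀ j, β k j ^ 2 = η k j ^ 2 * (ξbar k / ξ k) ^ 2 := by
        intro j; rw [hβ k j]; simp [hk]; ring
      rw [Finset.sum_congr rfl fun j _ => this j, ← Finset.sum_mul, ← hξsq k]
      field_simp
  -- per-group distance
  have hd : ∀ k, ∑ j, (η k j - β k j) ^ 2 ≤ (ξ k - ξbar k) ^ 2 := by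
    intro k
    by_cases hk : ξ k = 0
    · have : ∑ j, (η k j - β k j) ^ 2 = 0 := by
        apply Finset.sum_eq_zero
        intro j _
        rw [hβ k j, hzero k hk j]
        simp [hk]
      rw [this]; exact sq_nonneg _
    · have heq : ∀ j, (η k j - β k j) ^ 2 = η k j ^ 2 * (1 - ξbar k / ξ k) ^ 2 := by
        intro j; rw [hβ k j]; simp [hk]; ring
      have : ∑ j, (η k j - β k j) ^ 2 = (ξ k - ξbar k) ^ 2 := by
        rw [Finset.sum_congr rfl fun j _ => heq j, ← Finset.sum_mul, ← hξsq k]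
        field_simp
      rw [this]
  constructor
  · calc ∑ k, Real.sqrt (∑ j, β k j ^ 2) ≤ ∑ k, |ξbar k| := by
          apply Finset.sum_le_sum
          intro k _
          rw [hβsq k]
          by_cases hk : ξ k = 0
          · simp [hk]
          · simp [hk, Real.sqrt_sq_eq_abs]
        _ ≤ lam := hξbarfeas
  · intro β' hfeas'
    set x : Fin g → ℝ := fun k => Real.sqrt (∑ j, β' k j ^ 2) with hx
    have hxnn : ∀ k, 0 ≤ x k := fun k => Real.sqrt_nonneg _
    have hxfeas : ∑ k, |x k| ≤ lam := by
      calc ∑ k, |x k| = ∑ k, x k := by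
            exact Finset.sum_congr rfl fun k _ => abs_of_nonneg (hxnn k)
        _ ≤ lam := hfeas'
    calc ∑ k, ∑ j, (η k j - β k j) ^ 2
        ≤ ∑ k, (ξ k - ξbar k) ^ 2 := Finset.sum_le_sum fun k _ => hd k
      _ ≤ ∑ k, (ξ k - x k) ^ 2 := hξbaropt x hxfeas
      _ ≤ ∑ k, ∑ j, (η k j - β' k j) ^ 2 := by
          apply Finset.sum_le_sum
          intro k _
          rw [hξ k, hx]
          exact sq_key (η k) (β' k)
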